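/- arXiv:1507.05370 — 2 statements merged into one kernel-verified Lean document; each statement's English description precedes it below -/
import Mathlib

section
/- Generalized Pythagorean theorem for Bregman projections: if Ω is a closed convex subset of S, P ∈ Ω, Q ∈ S, and P_Ω(Q) = argmin_{P'∈Ω} B_R(P',Q) is the Bregman projection of Q onto Ω, then B_R(P,Q) ≥ B_R(P, P_Ω(Q)) + B_R(P_Ω(Q), Q), and in particular B_R(P,Q) ≥ B_R(P, P_Ω(Q)). -/
open scoped RealInnerProductSpace

private lemma aux_deriv_ge {φ : ℝ → ℝ} {d c : ℝ} (hφ : HasDerivAt φ d 0)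
    (h : ∀ t ∈ Set.Ioc (0:ℝ) 1, c * t ≤ φ t - φ 0) : c ≤ d := by
  have hslope : Filter.Tendsto (slope φ 0) (nhdsWithin 0 (Set.Ioi 0)) (nhds d) :=
    (hasDerivAt_iff_tendsto_slope.mp hφ).mono_left
      (nhdsWithin_mono 0 (fun t ht => Set.mem_compl_singleton_iff.mpr (ne_of_gt ht)))
  refine ge_of_tendsto hslope ?_
  filter_upwards [Ioc_mem_nhdsGT_of_mem (Set.mem_Ico.mpr ⟨le_refl _, zero_lt_one⟩)] with t ht
  have ht0 : (0:ℝ) < t := ht.1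
  have := h t ht
  rw [slope_def_field, sub_zero, le_div_iff₀ ht0]
  linarith

private lemma aux_line_deriv {E : Type*} [NormedAddCommGroup E] [InnerProductSpace ℝ E]
    [CompleteSpace E] {f : E → ℝ} {g x v : E} (hf : HasGradientAt f g x) :
    HasDerivAt (fun t : ℝ => f (x + t • v)) ⟪g, v⟫ 0 := by
  have hline : HasDerivAt (fun t : ℝ => x + t • v) v 0 := by
    simpa using ((hasDerivAt_id (0:ℝ)).smul_const v).const_add x
  have hfd : HasFDerivAt f ((InnerProductSpace.toDual ℝ E) g) (x + (0:ℝ) • v) := by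
    simpa using hf.hasFDerivAt
  have h := hfd.comp_hasDerivAt 0 hline
  simp at h
  exact h

theorem bregman_pythagorean {n : ℕ} (S : Set (EuclideanSpace ℝ (Fin n)))
    (hSclosed : IsClosed S) (hSconv : Convex ℝ S)
    (R : EuclideanSpace ℝ (Fin n) → ℝ)
    (gradR : EuclideanSpace ℝ (Fin n) → EuclideanSpace ℝ (Fin n))
    (hgrad : ∀ x ∈ S, HasGradientAt R (gradR x) x)
    (hconv : StrictConvexOn ℝ S R)
    (B : EuclideanSpace ℝ (Fin n) → EuclideanSpace ℝ (Fin n) → ℝ)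
    (hB : ∀ P Q, B P Q = R P - R Q - ⟪P - Q, gradR Q⟫)
    (Ω : Set (EuclideanSpace ℝ (Fin n))) (hΩS : Ω ⊆ S)
    (hΩclosed : IsClosed Ω) (hΩconv : Convex ℝ Ω)
    (Q : EuclideanSpace ℝ (Fin n)) (hQ : Q ∈ S)
    (projQ : EuclideanSpace ℝ (Fin n)) (hproj_mem : projQ ∈ Ω)
    (hproj_min : ∀ P' ∈ Ω, B projQ Q ≤ B P' Q)
    (hproj_unique : ∀ P' ∈ Ω, B P' Q = B projQ Q → P' = projQ)
    (P : EuclideanSpace ℝ (Fin n)) (hP : P ∈ Ω) :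
    B P projQ + B projQ Q ≤ B P Q ∧ B P projQ ≤ B P Q := by
  set v := P - projQ with hv
  have hprojS : projQ ∈ S := hΩS hproj_mem
  -- Step A : ⟪v, gradR Q⟫ ≤ ⟪gradR projQ, v⟫  (optimality condition)
  have stepA : ⟪v, gradR Q⟫ ≤ ⟪gradR projQ, v⟫ := by
    refine aux_deriv_ge (φ := fun t : ℝ => R (projQ + t • v))
      (aux_line_deriv (hgrad projQ hprojS)) ?_
    intro t ht
    have hmem : projQ + t • v ∈ Ω := by
      have := hΩconv hproj_mem hP (by linarith [ht.2] : (0:ℝ) ≤ 1 - t)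
        (le_of_lt ht.1) (by ring)
      convert this using 1
      rw [hv]
      module
    have hmin := hproj_min _ hmem
    rw [hB, hB] at hmin
    have hin : ⟪projQ + t • v - Q, gradR Q⟫
        = ⟪projQ - Q, gradR Q⟫ + t * ⟪v, gradR Q⟫ := by
      rw [show projQ + t • v - Q = (projQ - Q) + t • v by module,
        inner_add_left, real_inner_smul_left]
    rw [hin] at hmin
    simp only [zero_smul, add_zero]
    rw [mul_comm]
    linarith
  -- Step B : 0 ≤ B projQ Q  (convexity)
  have stepB : (0:ℝ) ≤ B projQ Q := by
    set w := projQ - Q with hw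
    have hkey : R Q - R projQ ≤ - ⟪gradR Q, w⟫ := by
      refine aux_deriv_ge (φ := fun t : ℝ => - R (Q + t • w))
        (HasDerivAt.neg (aux_line_deriv (hgrad Q hQ))) ?_
      intro t ht
      have hcv := hconv.convexOn.2 hQ hprojS (by linarith [ht.2] : (0:ℝ) ≤ 1 - t)
        (le_of_lt ht.1) (by ring)
      have heq : (1 - t) • Q + t • projQ = Q + t • w := by rw [hw]; module
      rw [heq] at hcv
      simp only [smul_eq_mul] at hcv
      simp only [zero_smul, add_zero]
      nlinarith [hcv]
    have hcm : ⟪projQ - Q, gradR Q⟫ = ⟪gradR Q, w⟫ := by rw [hw, real_inner_comm]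
    rw [hB, hcm]
    linarith
  -- Combine
  have hdiff : B P Q - (B P projQ + B projQ Q)
      = ⟪gradR projQ, v⟫ - ⟪v, gradR Q⟫ := by
    rw [hB, hB, hB]
    have h1 : ⟪P - Q, gradR Q⟫ = ⟪v, gradR Q⟫ + ⟪projQ - Q, gradR Q⟫ := by
      rw [show P - Q = v + (projQ - Q) by rw [hv]; module, inner_add_left]
    have h2 : ⟪P - projQ, gradR projQ⟫ = ⟪gradR projQ, v⟫ := by
      rw [hv, real_inner_comm]
    rw [h1, h2]; ring
  constructor <;> linarith
end

section
/- Suppose pairs (P^t, α^t), t = 1,…,T, satisfy the regret bound max_{P∈Ξ_p} (1/T)Σ_t L(P, α^t) ≤ (1/T)Σ_t L(P^t, α^t) + ε and α^t = argmin_{α∈Δ} L(P^t, α) for each t, where L(P,α) = ⟨P, Φα - f⟩ is bilinear, Δ = {α : ‖α‖₁ ≤ τ} and Ξ_p = {P : ‖P‖_p ≤ 1} are compact convex. Then α̂ = (1/T)Σ_t α^t satisfies ‖Φα̂ - f‖_q ≤ min_{α∈Δ} ‖Φα - f‖_q + ε. -/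
open Finset

lemma sign_mul_self_eq_abs (x : ℝ) : Real.sign x * x = |x| := by
  rcases lt_trichotomy x 0 with h | h | h
  · rw [Real.sign_of_neg h, abs_of_neg h]; ring
  · simp [h]
  · rw [Real.sign_of_pos h, abs_of_pos h]; ring

lemma abs_sign_le_one (x : ℝ) : |Real.sign x| ≤ 1 := by
  rcases lt_trichotomy x 0 with h | h | h
  · simp [Real.sign_of_neg h]
  · simp [h, Real.sign_zero]
  · simp [Real.sign_of_pos h]

lemma dual_vec {M : ℕ} {q p : ℝ} (hqp : q.HolderConjugate p) (v : Fin M → ℝ) :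
    ∃ P : Fin M → ℝ, (∑ i, |P i| ^ p) ^ (1 / p) ≤ 1 ∧
      (∑ i, |v i| ^ q) ^ (1 / q) ≤ ∑ i, P i * v i := by
  obtain ⟨⟨g, hg, hsum⟩, -⟩ :=
    NNReal.isGreatest_Lp (s := (Finset.univ : Finset (Fin M)))
      (fun i => (⟨|v i|, abs_nonneg _⟩ : NNReal)) hqp
  refine ⟨fun i => Real.sign (v i) * (g i : ℝ), ?_, ?_⟩
  · have h1 : ∀ i : Fin M, |Real.sign (v i) * (g i : ℝ)| ^ p ≤ (g i : ℝ) ^ p := by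
      intro i
      apply Real.rpow_le_rpow (abs_nonneg _) _ hqp.symm.nonneg
      rw [abs_mul, abs_of_nonneg (g i).coe_nonneg]
      exact mul_le_of_le_one_left (g i).coe_nonneg (abs_sign_le_one _)
    have h2 : (∑ i, |Real.sign (v i) * (g i : ℝ)| ^ p) ≤ ∑ i, (g i : ℝ) ^ p :=
      Finset.sum_le_sum fun i _ => h1 i
    have hg' : (∑ i, (g i : ℝ) ^ p) ≤ 1 := by
      have := NNReal.coe_le_coe.2 hg
      push_cast at this
      simpa using this
    calc (∑ i, |Real.sign (v i) * (g i : ℝ)| ^ p) ^ (1 / p)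
        ≤ (1 : ℝ) ^ (1 / p) := by
          apply Real.rpow_le_rpow (Finset.sum_nonneg fun i _ => Real.rpow_nonneg (abs_nonneg _) _)
            (h2.trans hg') hqp.symm.one_div_pos.le
      _ = 1 := Real.one_rpow _
  · have := congrArg (fun x : NNReal => (x : ℝ)) hsum
    push_cast at this
    have heq : (∑ i, Real.sign (v i) * (g i : ℝ) * v i) = ∑ i, |v i| * (g i : ℝ) := by
      apply Finset.sum_congr rfl
      intro i _
      rw [mul_right_comm, sign_mul_self_eq_abs, mul_comm]
    rw [heq]
    refine le_of_eq ?_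
    convert this.symm using 1 <;> rfl

theorem regret_to_sparse_approximation {M N T : ℕ} (hT : 0 < T)
    (q p : ℝ) (hq : 1 < q) (hp : p = q / (q - 1))
    (Φ : Matrix (Fin M) (Fin N) ℝ) (f : Fin M → ℝ)
    (τ : ℝ) (hτ : 0 < τ) (ε : ℝ)
    (L : (Fin M → ℝ) → (Fin N → ℝ) → ℝ)
    (hL : ∀ P α, L P α = ∑ i, P i * (Φ.mulVec α - f) i)
    (Ps : Fin T → Fin M → ℝ) (αs : Fin T → Fin N → ℝ)
    (hPmem : ∀ t, (∑ i, |Ps t i| ^ p) ^ (1 / p) ≤ 1)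
    (hαmem : ∀ t, (∑ j, |αs t j|) ≤ τ)
    (hαmin : ∀ t, ∀ β : Fin N → ℝ, (∑ j, |β j|) ≤ τ → L (Ps t) (αs t) ≤ L (Ps t) β)
    (hregret : ∀ P : Fin M → ℝ, (∑ i, |P i| ^ p) ^ (1 / p) ≤ 1 →
      (1 / (T : ℝ)) * ∑ t, L P (αs t) ≤ (1 / (T : ℝ)) * ∑ t, L (Ps t) (αs t) + ε)
    (ahat : Fin N → ℝ) (hhat : ∀ j, ahat j = (∑ t, αs t j) / T) :
    ∀ β : Fin N → ℝ, (∑ j, |β j|) ≤ τ →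
      (∑ i, |(Φ.mulVec ahat - f) i| ^ q) ^ (1 / q) ≤
        (∑ i, |(Φ.mulVec β - f) i| ^ q) ^ (1 / q) + ε := by
  intro β hβ
  have hT' : (T : ℝ) ≠ 0 := Nat.cast_ne_zero.2 hT.ne'
  have hqp : q.HolderConjugate p := hp ▸ Real.HolderConjugate.conjExponent hq
  -- averaging identity
  have havg : ∀ P : Fin M → ℝ, L P ahat = (1 / (T : ℝ)) * ∑ t, L P (αs t) := by
    intro P
    have hmv : ∀ i, Φ.mulVec ahat i = (∑ t, Φ.mulVec (αs t) i) / T := by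
      intro i
      simp only [Matrix.mulVec, dotProduct, hhat]
      rw [Finset.sum_comm, Finset.sum_div]
      refine Finset.sum_congr rfl fun j _ => ?_
      rw [← Finset.mul_sum, mul_div_assoc]
    have h1 : ∑ t, L P (αs t) = ∑ i, P i * ((∑ t, Φ.mulVec (αs t) i) - T * f i) := by
      rw [show (∑ t, L P (αs t)) = ∑ t, ∑ i, P i * (Φ.mulVec (αs t) i - f i) from
        Finset.sum_congr rfl fun t _ => hL P (αs t), Finset.sum_comm]
      refine Finset.sum_congr rfl fun i _ => ?_
      rw [← Finset.mul_sum, Finset.sum_sub_distrib, Finset.sum_const, Finset.card_univ,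
        Fintype.card_fin, nsmul_eq_mul]
    rw [hL, h1, Finset.mul_sum]
    refine Finset.sum_congr rfl fun i _ => ?_
    rw [Pi.sub_apply, hmv i]
    field_simp
  -- dual certificate
  obtain ⟨P, hP1, hP2⟩ := dual_vec hqp (Φ.mulVec ahat - f)
  have step1 : (∑ i, |(Φ.mulVec ahat - f) i| ^ q) ^ (1 / q) ≤ L P ahat := by
    rw [hL]; exact hP2
  have step2 := hregret P hP1
  -- per-round bound via Hölder
  have wnn : (0:ℝ) ≤ (∑ i, |(Φ.mulVec β - f) i| ^ q) ^ (1 / q) :=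
    Real.rpow_nonneg (Finset.sum_nonneg fun i _ => Real.rpow_nonneg (abs_nonneg _) _) _
  have step3 : ∀ t, L (Ps t) (αs t) ≤ (∑ i, |(Φ.mulVec β - f) i| ^ q) ^ (1 / q) := by
    intro t
    refine (hαmin t β hβ).trans ?_
    rw [hL]
    calc ∑ i, Ps t i * (Φ.mulVec β - f) i
        ≤ (∑ i, |Ps t i| ^ p) ^ (1 / p) * (∑ i, |(Φ.mulVec β - f) i| ^ q) ^ (1 / q) :=
          Real.inner_le_Lp_mul_Lq Finset.univ _ _ hqp.symm
      _ ≤ 1 * (∑ i, |(Φ.mulVec β - f) i| ^ q) ^ (1 / q) :=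
          mul_le_mul_of_nonneg_right (hPmem t) wnn
      _ = _ := one_mul _
  have step4 : (1 / (T : ℝ)) * ∑ t, L (Ps t) (αs t) ≤
      (∑ i, |(Φ.mulVec β - f) i| ^ q) ^ (1 / q) := by
    have : (∑ t, L (Ps t) (αs t)) ≤ ∑ t : Fin T, (∑ i, |(Φ.mulVec β - f) i| ^ q) ^ (1 / q) :=
      Finset.sum_le_sum fun t _ => step3 t
    rw [Finset.sum_const, Finset.card_univ, Fintype.card_fin, nsmul_eq_mul] at this
    calc (1 / (T : ℝ)) * ∑ t, L (Ps t) (αs t)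
        ≤ (1 / (T : ℝ)) * ((T : ℝ) * (∑ i, |(Φ.mulVec β - f) i| ^ q) ^ (1 / q)) := by
          apply mul_le_mul_of_nonneg_left this
          positivity
      _ = _ := by field_simp
  calc (∑ i, |(Φ.mulVec ahat - f) i| ^ q) ^ (1 / q)
      ≤ L P ahat := step1
    _ = (1 / (T : ℝ)) * ∑ t, L P (αs t) := havg P
    _ ≤ (1 / (T : ℝ)) * ∑ t, L (Ps t) (αs t) + ε := step2
    _ ≤ (∑ i, |(Φ.mulVec β - f) i| ^ q) ^ (1 / q) + ε := add_le_add_left step4 _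
end
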